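/- arXiv:0804.4014 — 4 statements merged into one kernel-verified Lean document; each statement's English description precedes it below -/
import Mathlib

section
/- Let b₁,...,bₙ ∈ ℝ^m be an arbitrary basis of the lattice L with Gram–Schmidt vectors b₁*,...,bₙ*, and let d₁,...,d_k be linearly independent vectors from L. Then det L(d₁,...,d_k) ≥ min over all index sets 1 ≤ i₁ < i₂ < ... < i_k ≤ n of the product ‖b_{i₁}*‖·‖b_{i₂}*‖⋯‖b_{i_k}*‖. -/
open scoped BigOperators RealInnerProductSpace

/-- The Gram–Schmidt orthogonalization `b₁*, …, bₙ*` of the vectors `b₁, …, bₙ`: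
`bᵢ* = bᵢ - ∑_{j<i} μᵢⱼ bⱼ*`. -/
noncomputable def gso {m n : ℕ} (b : Fin n → EuclideanSpace ℝ (Fin m)) :
    Fin n → EuclideanSpace ℝ (Fin m) :=
  haveI : WellFoundedLT (Fin n) := inferInstance
  InnerProductSpace.gramSchmidt ℝ b

/-- The Gram–Schmidt coefficient `μᵢⱼ = ⟨bᵢ, bⱼ*⟩ / ⟨bⱼ*, bⱼ*⟩`. -/
noncomputable def mu {m n : ℕ} (b : Fin n → EuclideanSpace ℝ (Fin m)) (i j : Fin n) : ℝ :=
  ⟪b i, gso b j⟫ / ⟪gso b j, gso b j⟫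

/-- `b₁, …, bₙ` is LLL-reduced: `|μⱼᵢ| ≤ 1/2` for `i < j`, and the exchange condition
`‖bⱼ* + μ_{j,j-1} b_{j-1}*‖² ≥ (3/4) ‖b_{j-1}*‖²` for consecutive indices `i + 1 = j`. -/
def LLLReduced {m n : ℕ} (b : Fin n → EuclideanSpace ℝ (Fin m)) : Prop :=
  (∀ i j : Fin n, i < j → |mu b j i| ≤ 1 / 2) ∧
  (∀ i j : Fin n, (i : ℕ) + 1 = (j : ℕ) →
    (3 / 4 : ℝ) * ‖gso b i‖ ^ 2 ≤ ‖gso b j + mu b j i • gso b i‖ ^ 2)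

/-- Membership in the lattice generated by `b₁, …, bₙ`: an integer linear combination. -/
def inLattice {m n : ℕ} (b : Fin n → EuclideanSpace ℝ (Fin m))
    (x : EuclideanSpace ℝ (Fin m)) : Prop :=
  ∃ c : Fin n → ℤ, x = ∑ i, (c i : ℝ) • b i

/-- The determinant of the lattice generated by `d₁, …, d_k`:
`√(det DᵀD)`, i.e. the square root of the Gram determinant. -/
noncomputable def latticeDet {m k : ℕ} (d : Fin k → EuclideanSpace ℝ (Fin m)) : ℝ :=
  Real.sqrt (Matrix.det (Matrix.of fun i j => ⟪d i, d j⟫))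

open Finset Matrix
open InnerProductSpace

variable {m : ℕ}

lemma gram_comb {K N : ℕ} (v : Fin N → EuclideanSpace ℝ (Fin m))
    (A : Matrix (Fin K) (Fin N) ℝ) (i j : Fin K) :
    ⟪∑ l, A i l • v l, ∑ l, A j l • v l⟫ =
      (A * (Matrix.of fun l l' => (inner ℝ (v l) (v l') : ℝ)) * Aᵀ) i j := by
  have hrow : ∀ l', (inner ℝ (∑ l, A i l • v l) (v l') : ℝ) = ∑ l, A i l * ⟪v l, v l'⟫ := by
    intro l'
    rw [sum_inner]
    exact Finset.sum_congr rfl fun l _ => real_inner_smul_left _ _ _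
  calc (inner ℝ (∑ l, A i l • v l) (∑ l', A j l' • v l') : ℝ)
      = ∑ l', A j l' * ⟪∑ l, A i l • v l, v l'⟫ := by
        rw [inner_sum]
        exact Finset.sum_congr rfl fun l' _ => real_inner_smul_right _ _ _
    _ = ∑ l', (∑ l, A i l * ⟪v l, v l'⟫) * A j l' := by
        apply Finset.sum_congr rfl
        intro l' _
        rw [hrow]
        ring
    _ = (A * (Matrix.of fun l l' => (inner ℝ (v l) (v l') : ℝ)) * Aᵀ) i j := by
        simp [Matrix.mul_apply]

lemma sum_L_gs {K : ℕ} (v : Fin K → EuclideanSpace ℝ (Fin m)) (t : Fin K) :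
    v t = ∑ l, (if l < t then ⟪gso v l, v t⟫ / ‖gso v l‖ ^ 2
      else if l = t then 1 else 0) • gso v l := by
  haveI : WellFoundedLT (Fin K) := inferInstance
  have h := gramSchmidt_def'' ℝ v t
  show v t = _
  rw [show gso v = gramSchmidt ℝ v from rfl]
  conv_lhs => rw [h]
  have key : ∀ l : Fin K,
      (if l < t then ⟪gramSchmidt ℝ v l, v t⟫ / ‖gramSchmidt ℝ v l‖ ^ 2
        else if l = t then 1 else 0) • gramSchmidt ℝ v l =
      (if l ∈ Iio t then (⟪gramSchmidt ℝ v l, v t⟫ / (‖gramSchmidt ℝ v l‖ : ℝ) ^ 2) • gramSchmidt ℝ v l else 0)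
      + (if l = t then gramSchmidt ℝ v l else 0) := by
    intro l
    by_cases h1 : l < t
    · simp [h1, Finset.mem_Iio, h1.ne]
    · by_cases h2 : l = t
      · simp [h1, h2]
      · simp [h1, h2, Finset.mem_Iio]
  rw [Finset.sum_congr rfl (fun l _ => key l), Finset.sum_add_distrib]
  rw [Finset.sum_ite_mem, Finset.univ_inter, Finset.sum_ite_eq' Finset.univ t]
  simp [add_comm]

/-- Gram determinant equals product of squared Gram-Schmidt norms. -/
lemma det_gram_eq_prod_gso {K : ℕ} (v : Fin K → EuclideanSpace ℝ (Fin m)) :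
    (Matrix.of fun i j => (inner ℝ (v i) (v j) : ℝ)).det = ∏ i, ‖gso v i‖ ^ 2 := by
  haveI : WellFoundedLT (Fin K) := inferInstance
  set L : Matrix (Fin K) (Fin K) ℝ := Matrix.of fun i l =>
    (if l < i then ⟪gso v l, v i⟫ / ‖gso v l‖ ^ 2 else if l = i then 1 else 0) with hL
  have hGram : (Matrix.of fun i j => (inner ℝ (v i) (v j) : ℝ)) =
      L * (Matrix.of fun l l' => (inner ℝ (gso v l) (gso v l') : ℝ)) * Lᵀ := by
    ext i j
    rw [Matrix.of_apply, ← gram_comb (gso v) L i j]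
    congr 1 <;> · simp only [hL, Matrix.of_apply]
                  exact sum_L_gs v _
  have hdiag : (Matrix.of fun l l' => (inner ℝ (gso v l) (gso v l') : ℝ)) =
      Matrix.diagonal (fun l => ‖gso v l‖ ^ 2) := by
    ext l l'
    by_cases h : l = l'
    · subst h
      simp only [Matrix.of_apply, Matrix.diagonal_apply_eq]
      exact real_inner_self_eq_norm_sq _
    · simp [Matrix.diagonal, h]
      exact gramSchmidt_orthogonal ℝ v h
  have hLtri : L.det = 1 := by
    have h : L.BlockTriangular OrderDual.toDual := by
      intro i j hij
      have : i < j := hij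
      simp [hL, not_lt.mpr this.le, this.ne']
    rw [Matrix.det_of_lowerTriangular L h]
    apply Finset.prod_eq_one
    intro i _
    simp [hL]
  rw [hGram, hdiag, Matrix.det_mul, Matrix.det_mul, hLtri, Matrix.det_transpose, hLtri,
    Matrix.det_diagonal]
  ring

/-- Left-multiplication by a matrix with a right inverse preserves row independence. -/
lemma rows_li {K N : ℕ} (U V : Matrix (Fin K) (Fin K) ℝ) (hUV : U * V = 1)
    {C : Matrix (Fin K) (Fin N) ℝ} (hC : LinearIndependent ℝ (fun i => C i)) :
    LinearIndependent ℝ (fun i => (U * C) i) := by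
  rw [Fintype.linearIndependent_iff] at hC ⊢
  intro a ha
  have hsum : ∀ (x : Fin K → ℝ) (M : Matrix (Fin K) (Fin N) ℝ),
      ∑ i, x i • M i = Matrix.vecMul x M := by
    intro x M
    funext j
    simp [Matrix.vecMul, dotProduct, Finset.sum_apply]
  have key : Matrix.vecMul a (U * C) = 0 := by
    rw [← hsum]
    exact ha
  have h1 : Matrix.vecMul (Matrix.vecMul a U) C = 0 := by
    rw [Matrix.vecMul_vecMul]
    exact key
  have h2 : Matrix.vecMul a U = 0 := by
    funext i
    exact hC (Matrix.vecMul a U) (by rw [hsum]; exact h1) i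
  have h3 : a = 0 := by
    have := congrArg (fun x => Matrix.vecMul x V) h2
    simpa [Matrix.vecMul_vecMul, hUV, Matrix.vecMul_one, Matrix.zero_vecMul] using this
  intro i
  rw [h3]
  rfl

lemma echelon : ∀ (n : ℕ) {k : ℕ} (C : Matrix (Fin k) (Fin n) ℝ),
    LinearIndependent ℝ (fun i => C i) →
    ∃ (U : Matrix (Fin k) (Fin k) ℝ) (σ : Fin k → Fin n),
      IsUnit U.det ∧ StrictMono σ ∧
      (∀ i l, σ i < l → (U * C) i l = 0) ∧
      (∀ i, (U * C) i (σ i) ≠ 0) := by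
  intro n
  induction n with
  | zero =>
    intro k C hC
    cases k with
    | zero =>
      refine ⟨1, Fin.elim0, by simp, fun i => i.elim0, fun i => i.elim0, fun i => i.elim0⟩
    | succ k =>
      exact absurd (funext fun j => j.elim0 : C 0 = 0) (hC.ne_zero 0)
  | succ n ih =>
    intro k C hC
    by_cases hlast : ∀ i, C i (Fin.last n) = 0
    · -- last column is zero: drop it
      set D : Matrix (Fin k) (Fin n) ℝ := Matrix.of fun i j => C i j.castSucc with hD
      have hDli : LinearIndependent ℝ (fun i => D i) := by
        rw [Fintype.linearIndependent_iff] at hC ⊢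
        intro a ha
        apply hC a
        funext j
        induction j using Fin.lastCases with
        | last => simp [Finset.sum_apply, hlast]
        | cast j' =>
          have := congrFun ha j'
          simpa [Finset.sum_apply, hD] using this
      obtain ⟨U, σ, hU, hσ, hz, hp⟩ := ih D hDli
      have hUC : ∀ i l', (U * C) i (Fin.castSucc l') = (U * D) i l' := by
        intro i l'
        simp [Matrix.mul_apply, hD]
      have hUClast : ∀ i, (U * C) i (Fin.last n) = 0 := by
        intro i
        simp [Matrix.mul_apply, hlast]
      refine ⟨U, fun i => (σ i).castSucc, hU,
        fun i j hij => Fin.castSucc_lt_castSucc_iff.mpr (hσ hij), ?_, ?_⟩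
      · intro i l hl
        induction l using Fin.lastCases with
        | last => exact hUClast i
        | cast l' =>
          rw [hUC]
          exact hz i l' (Fin.castSucc_lt_castSucc_iff.mp hl)
      · intro i
        rw [hUC]
        exact hp i
    · -- some row has nonzero last entry
      push_neg at hlast
      obtain ⟨i0, hi0⟩ := hlast
      cases k with
      | zero => exact i0.elim0
      | succ k =>
      set w : Fin (k+1) → ℝ :=
        fun i => if i = i0 then 0 else -(C i (Fin.last n) / C i0 (Fin.last n)) with hw
      set N : Matrix (Fin (k+1)) (Fin (k+1)) ℝ :=
        Matrix.of fun i j => if j = i0 then w i else 0 with hN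
      have hNN : N * N = 0 := by
        ext i j
        rw [Matrix.mul_apply]
        apply Finset.sum_eq_zero
        intro t _
        by_cases ht : t = i0
        · subst ht
          simp [hN, hw]
        · simp [hN, ht]
      set Emat := (1 : Matrix (Fin (k+1)) (Fin (k+1)) ℝ) + N with hE
      have hEinv : Emat * (1 - N) = 1 := by
        have h1 : Emat * (1 - N) = 1 - N + (N - N * N) := by
          rw [hE, add_mul, one_mul, mul_sub, mul_one]
        rw [h1, hNN]
        abel
      have hErow : ∀ i j, (Emat * C) i j = C i j + w i * C i0 j := by
        intro i j
        rw [hE, Matrix.add_mul, Matrix.one_mul, Matrix.add_apply]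
        congr 1
        rw [Matrix.mul_apply]
        rw [Finset.sum_eq_single i0]
        · simp [hN]
        · intro t _ ht
          simp [hN, ht]
        · intro h
          exact absurd (Finset.mem_univ i0) h
      have hErowi0 : ∀ j, (Emat * C) i0 j = C i0 j := by
        intro j
        rw [hErow]
        simp [hw]
      have hErowlast : ∀ i, i ≠ i0 → (Emat * C) i (Fin.last n) = 0 := by
        intro i hi
        rw [hErow, hw]
        simp only [if_neg hi]
        field_simp
        ring
      have hECli : LinearIndependent ℝ (fun i => (Emat * C) i) :=
        rows_li Emat (1 - N) hEinv hC
      set D : Matrix (Fin k) (Fin n) ℝ :=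
        Matrix.of fun i j => (Emat * C) (i0.succAbove i) j.castSucc with hD
      have hDli : LinearIndependent ℝ (fun i => D i) := by
        rw [Fintype.linearIndependent_iff] at hECli ⊢
        intro a ha
        set a' : Fin (k+1) → ℝ := i0.insertNth 0 a with ha'
        have h0 : ∑ t, a' t • (Emat * C) t = 0 := by
          rw [Fin.sum_univ_succAbove _ i0]
          simp only [ha', Fin.insertNth_apply_same, Fin.insertNth_apply_succAbove, zero_smul,
            zero_add]
          funext j
          induction j using Fin.lastCases with
          | last =>
            simp only [Finset.sum_apply, Pi.smul_apply, Pi.zero_apply, smul_eq_mul]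
            apply Finset.sum_eq_zero
            intro t _
            rw [hErowlast _ (Fin.succAbove_ne i0 t)]
            ring
          | cast j' =>
            have := congrFun ha j'
            simpa [Finset.sum_apply, hD] using this
        intro i
        have := hECli a' h0 (i0.succAbove i)
        simpa [ha', Fin.insertNth_apply_succAbove] using this
      obtain ⟨U', σ', hU', hσ', hz', hp'⟩ := ih D hDli
      -- the permutation sending castSucc i ↦ i0.succAbove i, last ↦ i0
      set π : Equiv.Perm (Fin (k+1)) :=
        (finSuccEquiv' (Fin.last k)).trans (finSuccEquiv' i0).symm with hπ
      have hπlast : π (Fin.last k) = i0 := by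
        simp [hπ, finSuccEquiv'_at, finSuccEquiv'_symm_none]
      have hπcast : ∀ i : Fin k, π i.castSucc = i0.succAbove i := by
        intro i
        rw [hπ]
        simp only [Equiv.trans_apply]
        rw [← Fin.succAbove_last_apply i, finSuccEquiv'_succAbove, finSuccEquiv'_symm_some]
      have hcsca : ∀ i : Fin k, Fin.castSucc i = Fin.castAdd 1 i := fun i => rfl
      have hlastna : Fin.last k = Fin.natAdd k (0 : Fin 1) := by
        ext
        simp
      set B1 : Matrix (Fin (k+1)) (Fin (k+1)) ℝ :=
        (Matrix.fromBlocks U' 0 0 (1 : Matrix (Fin 1) (Fin 1) ℝ)).submatrix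
          finSumFinEquiv.symm finSumFinEquiv.symm with hB1
      have hB1cc : ∀ i i' : Fin k, B1 i.castSucc i'.castSucc = U' i i' := by
        intro i i'
        simp [hB1, hcsca, finSumFinEquiv_symm_apply_castAdd]
      have hB1cl : ∀ i : Fin k, B1 i.castSucc (Fin.last k) = 0 := by
        intro i
        simp [hB1, hcsca, hlastna, finSumFinEquiv_symm_apply_castAdd,
          finSumFinEquiv_symm_apply_natAdd]
      have hB1lc : ∀ i' : Fin k, B1 (Fin.last k) i'.castSucc = 0 := by
        intro i'
        simp [hB1, hcsca, hlastna, finSumFinEquiv_symm_apply_castAdd,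
          finSumFinEquiv_symm_apply_natAdd]
      have hB1ll : B1 (Fin.last k) (Fin.last k) = 1 := by
        simp [hB1, hlastna, finSumFinEquiv_symm_apply_natAdd, Matrix.one_apply]
      set U : Matrix (Fin (k+1)) (Fin (k+1)) ℝ :=
        B1 * (π.toPEquiv.toMatrix : Matrix (Fin (k+1)) (Fin (k+1)) ℝ) * Emat with hUdef
      have hUC : U * C = B1 * ((Emat * C).submatrix π id) := by
        rw [hUdef, Matrix.mul_assoc, Matrix.mul_assoc, PEquiv.toMatrix_toPEquiv_mul]
      have hrow_cast : ∀ (i : Fin k) (j : Fin (n+1)),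
          (U * C) i.castSucc j = ∑ i', U' i i' * (Emat * C) (i0.succAbove i') j := by
        intro i j
        rw [hUC, Matrix.mul_apply]
        rw [Fin.sum_univ_castSucc]
        rw [hB1cl]
        simp only [Matrix.submatrix_apply, id_eq, zero_mul, add_zero]
        apply Finset.sum_congr rfl
        intro i' _
        rw [hB1cc, hπcast]
      have hrow_last : ∀ j, (U * C) (Fin.last k) j = C i0 j := by
        intro j
        rw [hUC, Matrix.mul_apply, Fin.sum_univ_castSucc]
        simp only [Matrix.submatrix_apply, id_eq]
        rw [hB1ll, hπlast, one_mul, hErowi0]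
        rw [Finset.sum_eq_zero, zero_add]
        intro i' _
        rw [hB1lc, zero_mul]
      have hcc : ∀ (i : Fin k) (j' : Fin n),
          (U * C) i.castSucc j'.castSucc = (U' * D) i j' := by
        intro i j'
        rw [hrow_cast, Matrix.mul_apply]
        apply Finset.sum_congr rfl
        intro i' _
        rw [hD]
        rfl
      have hcl : ∀ i : Fin k, (U * C) i.castSucc (Fin.last n) = 0 := by
        intro i
        rw [hrow_cast]
        apply Finset.sum_eq_zero
        intro i' _
        rw [hErowlast _ (Fin.succAbove_ne i0 i'), mul_zero]
      -- determinant
      have hUdet : IsUnit U.det := by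
        rw [hUdef, Matrix.det_mul, Matrix.det_mul]
        have hd1 : IsUnit B1.det := by
          rw [hB1, Matrix.det_submatrix_equiv_self, Matrix.det_fromBlocks_zero₂₁,
            Matrix.det_one, mul_one]
          exact hU'
        have hd2 : IsUnit ((π.toPEquiv.toMatrix : Matrix (Fin (k+1)) (Fin (k+1)) ℝ)).det := by
          rw [show (π.toPEquiv.toMatrix : Matrix (Fin (k+1)) (Fin (k+1)) ℝ) = π.permMatrix ℝ
            from rfl, Matrix.det_permutation]
          rcases Int.units_eq_one_or (Equiv.Perm.sign π) with h | h <;> simp [h]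
        have hd3 : IsUnit Emat.det := Matrix.isUnit_det_of_right_inverse hEinv
        exact (hd1.mul hd2).mul hd3
      -- final σ
      refine ⟨U, Fin.lastCases (Fin.last n) (fun i => (σ' i).castSucc), hUdet, ?_, ?_, ?_⟩
      · intro x y hxy
        induction y using Fin.lastCases with
        | last =>
          have hx : x ≠ Fin.last k := hxy.ne
          obtain ⟨x', rfl⟩ := Fin.exists_castSucc_eq.mpr hx
          simp only [Fin.lastCases_castSucc, Fin.lastCases_last]
          exact Fin.castSucc_lt_last _
        | cast y' =>
          have hx : x ≠ Fin.last k := by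
            intro h
            rw [h] at hxy
            exact absurd hxy (Fin.castSucc_lt_last y').asymm
          obtain ⟨x', rfl⟩ := Fin.exists_castSucc_eq.mpr hx
          simp only [Fin.lastCases_castSucc]
          exact Fin.castSucc_lt_castSucc_iff.mpr (hσ' (Fin.castSucc_lt_castSucc_iff.mp hxy))
      · intro i l hl
        induction i using Fin.lastCases with
        | last =>
          simp only [Fin.lastCases_last] at hl
          exact absurd hl (Fin.le_last l).not_gt
        | cast i' =>
          simp only [Fin.lastCases_castSucc] at hl
          induction l using Fin.lastCases with
          | last => exact hcl i'
          | cast l' =>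
            rw [hcc]
            exact hz' i' l' (Fin.castSucc_lt_castSucc_iff.mp hl)
      · intro i
        induction i using Fin.lastCases with
        | last =>
          simp only [Fin.lastCases_last]
          rw [hrow_last]
          exact hi0
        | cast i' =>
          simp only [Fin.lastCases_castSucc]
          rw [hcc]
          exact hp' i'

lemma sum_mul_smul {K N P : ℕ} (A : Matrix (Fin K) (Fin N) ℝ) (B : Matrix (Fin N) (Fin P) ℝ)
    (w : Fin P → EuclideanSpace ℝ (Fin m)) (i : Fin K) :
    ∑ l, (A * B) i l • w l = ∑ j, A i j • (∑ l, B j l • w l) := by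
  simp only [Matrix.mul_apply, Finset.sum_smul, Finset.smul_sum, smul_smul]
  exact Finset.sum_comm

lemma inner_zero_span {S : Set (EuclideanSpace ℝ (Fin m))} {g : EuclideanSpace ℝ (Fin m)}
    (hg : ∀ x ∈ S, (inner ℝ x g : ℝ) = 0) {y : EuclideanSpace ℝ (Fin m)}
    (hy : y ∈ Submodule.span ℝ S) : (inner ℝ y g : ℝ) = 0 := by
  induction hy using Submodule.span_induction with
  | mem x hx => exact hg x hx
  | zero => simp
  | add x y _ _ hx hy => rw [inner_add_left, hx, hy, add_zero]
  | smul a x _ hx => rw [real_inner_smul_left, hx, mul_zero]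

theorem sublattice_det_ge_min_prod_gso {m n k : ℕ}
    (b : Fin n → EuclideanSpace ℝ (Fin m))
    (hb : LinearIndependent ℝ b)
    (d : Fin k → EuclideanSpace ℝ (Fin m))
    (hd : LinearIndependent ℝ d) (hdL : ∀ i, inLattice b (d i)) :
    ∃ t : Fin k → Fin n, StrictMono t ∧
      ∏ i : Fin k, ‖gso b (t i)‖ ≤ latticeDet d := by
  classical
  haveI : WellFoundedLT (Fin n) := inferInstance
  haveI : WellFoundedLT (Fin k) := inferInstance
  choose c hc using hdL
  set C : Matrix (Fin k) (Fin n) ℝ := Matrix.of fun i j => ((c i j : ℝ)) with hCdef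
  have hCli : LinearIndependent ℝ (fun i => C i) := by
    rw [Fintype.linearIndependent_iff] at hd ⊢
    intro a ha
    apply hd a
    have h1 : ∑ i, a i • d i = ∑ j, (∑ i, a i * C i j) • b j := by
      have h0 : ∀ i, a i • d i = ∑ j, (a i * C i j) • b j := by
        intro i
        rw [hc i, Finset.smul_sum]
        apply Finset.sum_congr rfl
        intro j _
        rw [smul_smul]
        rfl
      rw [Finset.sum_congr rfl fun i _ => h0 i, Finset.sum_comm]
      apply Finset.sum_congr rfl
      intro j _
      rw [Finset.sum_smul]
    rw [h1]
    apply Finset.sum_eq_zero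
    intro j _
    have h2 : (∑ i, a i * C i j) = 0 := by
      simpa [Finset.sum_apply] using congrFun ha j
    rw [h2, zero_smul]
  obtain ⟨U, σ, hU, hσ, hzero, hpiv⟩ := echelon n C hCli
  refine ⟨σ, hσ, ?_⟩
  set M : Matrix (Fin n) (Fin n) ℝ := Matrix.of fun t l =>
    (if l < t then (inner ℝ (gso b l) (b t) : ℝ) / ‖gso b l‖ ^ 2 else if l = t then 1 else 0)
    with hM
  have hbM : ∀ t, b t = ∑ l, M t l • gso b l := by
    intro t
    simpa [hM] using sum_L_gs b t
  set A : Matrix (Fin k) (Fin n) ℝ := U * C * M with hA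
  set e : Fin k → EuclideanSpace ℝ (Fin m) := fun i => ∑ l, A i l • gso b l with he
  have heU : ∀ i, e i = ∑ j, U i j • d j := by
    intro i
    show ∑ l, A i l • gso b l = _
    rw [hA, Matrix.mul_assoc, sum_mul_smul]
    apply Finset.sum_congr rfl
    intro j _
    congr 1
    rw [sum_mul_smul, hc j]
    apply Finset.sum_congr rfl
    intro t _
    congr 1
    exact (hbM t).symm
  set Gd : Matrix (Fin k) (Fin k) ℝ := Matrix.of fun i j => (inner ℝ (d i) (d j) : ℝ) with hGd
  have hGe : (Matrix.of fun i j => (inner ℝ (e i) (e j) : ℝ)) = U * Gd * Uᵀ := by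
    ext i j
    rw [Matrix.of_apply, heU i, heU j]
    exact gram_comb d U i j
  have hdetGe : U.det ^ 2 * Gd.det = ∏ i, ‖gso e i‖ ^ 2 := by
    rw [← det_gram_eq_prod_gso e, hGe, Matrix.det_mul, Matrix.det_mul, Matrix.det_transpose]
    ring
  have hAz : ∀ i l, σ i < l → A i l = 0 := by
    intro i l hl
    rw [hA, Matrix.mul_apply]
    apply Finset.sum_eq_zero
    intro t _
    by_cases ht : σ i < t
    · rw [hzero i t ht, zero_mul]
    · have h1 : ¬ l < t := fun h => ht (hl.trans h)
      have h2 : l ≠ t := fun h => ht (h ▸ hl)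
      have h3 : M t l = 0 := by simp [hM, h1, h2]
      rw [h3, mul_zero]
  have hApiv : ∀ i, A i (σ i) = (U * C) i (σ i) := by
    intro i
    have h1 : A i (σ i) = ∑ t, (U * C) i t * M t (σ i) := by rw [hA, Matrix.mul_apply]
    rw [h1, Finset.sum_eq_single (σ i)]
    · have h2 : M (σ i) (σ i) = 1 := by simp [hM]
      rw [h2, mul_one]
    · intro t _ ht
      by_cases h2 : σ i < t
      · rw [hzero i t h2, zero_mul]
      · have h3 : M t (σ i) = 0 := by simp [hM, h2, (Ne.symm ht : σ i ≠ t)]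
        rw [h3, mul_zero]
    · intro h
      exact absurd (Finset.mem_univ _) h
  have hbne : ∀ l, gso b l ≠ 0 := fun l => gramSchmidt_ne_zero l hb
  have key : ∀ i, |A i (σ i)| * ‖gso b (σ i)‖ ≤ ‖gso e i‖ := by
    intro i
    set X := Submodule.span ℝ (gso b '' {l | l < σ i}) with hX
    have horthX : ∀ y ∈ X, (inner ℝ y (gso b (σ i)) : ℝ) = 0 := by
      intro y hy
      refine inner_zero_span ?_ hy
      intro x hx
      obtain ⟨l, hl, rfl⟩ := hx
      exact gramSchmidt_orthogonal ℝ b (ne_of_lt hl)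
    have heX : ∀ j, j < i → e j ∈ X := by
      intro j hj
      show ∑ l, A j l • gso b l ∈ X
      apply Submodule.sum_mem
      intro l _
      by_cases hl : σ j < l
      · rw [hAz j l hl, zero_smul]
        exact X.zero_mem
      · apply Submodule.smul_mem
        apply Submodule.subset_span
        exact ⟨l, lt_of_le_of_lt (not_lt.mp hl) (hσ hj), rfl⟩
    have hgsoeX : ∀ j, j < i → gso e j ∈ X := by
      intro j hj
      have h1 : gso e j ∈ Submodule.span ℝ (e '' Set.Iic j) := gramSchmidt_mem_span ℝ e le_rfl
      refine Submodule.span_le.mpr ?_ h1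
      rintro x ⟨j', hj', rfl⟩
      exact heX j' (lt_of_le_of_lt hj' hj)
    have hproj : (inner ℝ (gso e i) (gso b (σ i)) : ℝ) = inner ℝ (e i) (gso b (σ i)) := by
      rw [show gso e i = gramSchmidt ℝ e i from rfl, gramSchmidt_def ℝ e i, inner_sub_left]
      have h0 : (inner ℝ (∑ j ∈ Finset.Iio i,
          ((ℝ ∙ gramSchmidt ℝ e j).starProjection (e i)))
          (gso b (σ i)) : ℝ) = 0 := by
        apply horthX
        apply Submodule.sum_mem
        intro j hj
        have h1 : ((ℝ ∙ gramSchmidt ℝ e j).starProjection (e i)) ∈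
            (ℝ ∙ gramSchmidt ℝ e j : Submodule ℝ _) :=
          Submodule.starProjection_apply_mem _ _
        have h2 : (ℝ ∙ gramSchmidt ℝ e j : Submodule ℝ _) ≤ X := by
          rw [Submodule.span_singleton_le_iff_mem]
          exact hgsoeX j (Finset.mem_Iio.mp hj)
        exact h2 h1
      rw [h0, sub_zero]
    have hinner : (inner ℝ (e i) (gso b (σ i)) : ℝ) = A i (σ i) * ‖gso b (σ i)‖ ^ 2 := by
      have h1 : (inner ℝ (e i) (gso b (σ i)) : ℝ) =
          ∑ l, (inner ℝ (A i l • gso b l) (gso b (σ i)) : ℝ) := by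
        rw [show e i = ∑ l, A i l • gso b l from rfl, sum_inner]
      rw [h1, Finset.sum_eq_single (σ i)]
      · rw [real_inner_smul_left, real_inner_self_eq_norm_sq]
      · intro l _ hl
        rw [real_inner_smul_left,
          show (inner ℝ (gso b l) (gso b (σ i)) : ℝ) = 0 from gramSchmidt_orthogonal ℝ b hl,
          mul_zero]
      · intro h
        exact absurd (Finset.mem_univ _) h
    have hCS := abs_real_inner_le_norm (gso e i) (gso b (σ i))
    rw [hproj, hinner, abs_mul, abs_of_nonneg (sq_nonneg (‖gso b (σ i)‖))] at hCS
    have hgpos : 0 < ‖gso b (σ i)‖ := norm_pos_iff.mpr (hbne (σ i))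
    have h4 : (|A i (σ i)| * ‖gso b (σ i)‖) * ‖gso b (σ i)‖ ≤ ‖gso e i‖ * ‖gso b (σ i)‖ := by
      calc (|A i (σ i)| * ‖gso b (σ i)‖) * ‖gso b (σ i)‖
          = |A i (σ i)| * ‖gso b (σ i)‖ ^ 2 := by ring
        _ ≤ ‖gso e i‖ * ‖gso b (σ i)‖ := hCS
    exact le_of_mul_le_mul_right h4 hgpos
  -- determinant of the pivot submatrix
  set T : Matrix (Fin k) (Fin k) ℝ := (U * C).submatrix id σ with hT
  have hTdet : T.det = ∏ i, (U * C) i (σ i) := by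
    have htri : T.BlockTriangular OrderDual.toDual := by
      intro i j hij
      exact hzero i (σ j) (hσ (hij : i < j))
    rw [Matrix.det_of_lowerTriangular T htri]
    rfl
  have hTU : T = U * (C.submatrix id σ) := by
    ext i j
    simp [hT, Matrix.mul_apply, Matrix.submatrix_apply]
  set z : ℤ := (Matrix.of fun i j => c i (σ j)).det with hzz
  have hzdet : (C.submatrix id σ).det = (z : ℝ) := by
    have hCs : C.submatrix id σ =
        (Int.castRingHom ℝ).mapMatrix (Matrix.of fun i j => c i (σ j)) := by
      ext i j
      simp [hCdef, Matrix.submatrix_apply, RingHom.mapMatrix_apply, Matrix.map_apply]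
    rw [hCs, ← RingHom.map_det]
    rfl
  have hprodpiv : ∏ i, (U * C) i (σ i) = U.det * (z : ℝ) := by
    rw [← hTdet, hTU, Matrix.det_mul, hzdet]
  have hpivne : ∏ i, (U * C) i (σ i) ≠ 0 := Finset.prod_ne_zero_iff.mpr fun i _ => hpiv i
  have hzne : z ≠ 0 := by
    intro h
    rw [h] at hprodpiv
    simp only [Int.cast_zero, mul_zero] at hprodpiv
    exact hpivne hprodpiv
  have hz1 : (1 : ℝ) ≤ (z : ℝ) ^ 2 := by
    have h1 : (1 : ℤ) ≤ z ^ 2 := by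
      nlinarith [Int.one_le_abs hzne, sq_abs z, abs_nonneg z]
    exact_mod_cast h1
  have hUdne : U.det ≠ 0 := hU.ne_zero
  set P := ∏ i, ‖gso b (σ i)‖ with hP
  have hPnn : (0:ℝ) ≤ P := Finset.prod_nonneg fun i _ => norm_nonneg _
  have hchain1 : ∏ i, (A i (σ i) ^ 2 * ‖gso b (σ i)‖ ^ 2) ≤ ∏ i, ‖gso e i‖ ^ 2 := by
    apply Finset.prod_le_prod
    · intro i _
      positivity
    · intro i _
      have h2 : (|A i (σ i)| * ‖gso b (σ i)‖) ^ 2 ≤ ‖gso e i‖ ^ 2 :=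
        pow_le_pow_left₀ (by positivity) (key i) 2
      calc A i (σ i) ^ 2 * ‖gso b (σ i)‖ ^ 2 = (|A i (σ i)| * ‖gso b (σ i)‖) ^ 2 := by
            rw [mul_pow, sq_abs]
        _ ≤ _ := h2
  have hprodA : ∏ i, (A i (σ i) ^ 2 * ‖gso b (σ i)‖ ^ 2)
      = (U.det * (z:ℝ))^2 * ∏ i, ‖gso b (σ i)‖^2 := by
    rw [Finset.prod_mul_distrib]
    congr 1
    rw [← hprodpiv, ← Finset.prod_pow]
    apply Finset.prod_congr rfl
    intro i _
    rw [hApiv i]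
  have hGdge : P ^ 2 ≤ Gd.det := by
    have h2 : U.det^2 * ((z:ℝ)^2 * ∏ i, ‖gso b (σ i)‖^2) ≤ U.det^2 * Gd.det := by
      rw [hdetGe]
      calc U.det^2 * ((z:ℝ)^2 * ∏ i, ‖gso b (σ i)‖^2)
          = (U.det * (z:ℝ))^2 * ∏ i, ‖gso b (σ i)‖^2 := by ring
        _ = ∏ i, (A i (σ i) ^ 2 * ‖gso b (σ i)‖ ^ 2) := hprodA.symm
        _ ≤ ∏ i, ‖gso e i‖ ^ 2 := hchain1
    have hU2 : (0:ℝ) < U.det ^ 2 := by positivity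
    have h3 : (z:ℝ)^2 * ∏ i, ‖gso b (σ i)‖^2 ≤ Gd.det :=
      le_of_mul_le_mul_left h2 hU2
    have h4 : ∏ i, ‖gso b (σ i)‖^2 ≤ (z:ℝ)^2 * ∏ i, ‖gso b (σ i)‖^2 :=
      le_mul_of_one_le_left (Finset.prod_nonneg fun i _ => by positivity) hz1
    have h5 : P^2 = ∏ i, ‖gso b (σ i)‖^2 := by
      rw [hP, ← Finset.prod_pow]
    linarith
  have hld : latticeDet d = Real.sqrt Gd.det := rfl
  rw [hld]
  have h6 := Real.sqrt_le_sqrt hGdge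
  rw [Real.sqrt_sq hPnn] at h6
  exact h6
end

section
/- Let b₁,...,bₙ ∈ ℝ^m be a basis of the lattice L, and let d₁,...,d_k be linearly independent vectors from L. Then there exists a k×k unimodular matrix U (an integer matrix with determinant ±1) such that, writing [d̄₁,...,d̄_k] = [d₁,...,d_k]·U, each d̄ᵢ has the form d̄ᵢ = Σ_{j=1}^{tᵢ} λᵢⱼ bⱼ with λᵢⱼ ∈ ℤ and λ_{i,tᵢ} ≠ 0, where the indices satisfy t₁ < t₂ < ... < t_k. -/
open scoped BigOperators RealInnerProductSpace

/-- extension map appending 0 -/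
noncomputable def extMap (n : ℕ) : (Fin n → ℤ) →ₗ[ℤ] (Fin (n+1) → ℤ) where
  toFun x := Fin.snoc x 0
  map_add' x y := by
    funext j
    refine Fin.lastCases ?_ (fun j => ?_) j <;> simp
  map_smul' c x := by
    funext j
    refine Fin.lastCases ?_ (fun j => ?_) j <;> simp

lemma extMap_rest {n : ℕ} (x : Fin (n+1) → ℤ) (hx : x (Fin.last n) = 0) :
    extMap n (x ∘ Fin.castSucc) = x := by
  funext j
  refine Fin.lastCases ?_ (fun j => ?_) j
  · simpa [extMap] using hx.symm
  · simp [extMap]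

lemma extMap_inj (n : ℕ) : Function.Injective (extMap n) := by
  intro x y h
  funext j
  have := congrFun h (Fin.castSucc j)
  simpa [extMap] using this

lemma echelon_basis (n : ℕ) (N : Submodule ℤ (Fin n → ℤ)) :
    ∃ (k : ℕ) (e : Fin k → (Fin n → ℤ)) (t : Fin k → Fin n),
      StrictMono t ∧ LinearIndependent ℤ e ∧ Submodule.span ℤ (Set.range e) = N ∧
      ∀ i, e i (t i) ≠ 0 ∧ ∀ j, t i < j → e i j = 0 := by
  induction n with
  | zero =>
    refine ⟨0, Fin.elim0, Fin.elim0, fun i => i.elim0, linearIndependent_empty_type, ?_, fun i => i.elim0⟩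
    have : N = ⊥ := by
      ext x
      simp only [Submodule.mem_bot]
      constructor
      · intro _; funext j; exact j.elim0
      · rintro rfl; exact N.zero_mem
    simp [this]
  | succ n IH =>
    set f : (Fin (n+1) → ℤ) →ₗ[ℤ] ℤ := LinearMap.proj (Fin.last n) with hf
    set ρ : (Fin (n+1) → ℤ) →ₗ[ℤ] (Fin n → ℤ) := LinearMap.funLeft ℤ ℤ Fin.castSucc with hρ
    set I : Submodule ℤ ℤ := N.map f with hI
    obtain ⟨g, hg⟩ : ∃ g, I = Submodule.span ℤ {g} :=
      ⟨Submodule.IsPrincipal.generator I, (Submodule.IsPrincipal.span_singleton_generator I).symm⟩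
    by_cases hg0 : g = 0
    · -- all last coordinates vanish
      have hlast : ∀ x ∈ N, x (Fin.last n) = 0 := by
        intro x hx
        have : f x ∈ I := Submodule.mem_map_of_mem hx
        rw [hg, hg0, Submodule.span_zero_singleton] at this
        simpa [hf] using this
      obtain ⟨k, e', t', hmono, hli, hspan, hpiv⟩ := IH (N.map ρ)
      refine ⟨k, fun i => extMap n (e' i), fun i => (t' i).castSucc, ?_, ?_, ?_, ?_⟩
      · exact fun i j hij => Fin.castSucc_lt_castSucc_iff.mpr (hmono hij)
      · exact hli.map' (extMap n) (LinearMap.ker_eq_bot.mpr (extMap_inj n))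
      · have : Set.range (fun i => extMap n (e' i)) = extMap n '' Set.range e' := by
          ext x; simp [Set.range_comp]
        rw [this, Submodule.span_image, hspan]
        apply le_antisymm
        · rintro x ⟨y, hy, rfl⟩
          obtain ⟨z, hz, rfl⟩ := hy
          rw [show ρ z = z ∘ Fin.castSucc from rfl, extMap_rest z (hlast z hz)]
          exact hz
        · intro x hx
          have : extMap n (ρ x) = x := extMap_rest x (hlast x hx)
          exact ⟨ρ x, Submodule.mem_map_of_mem hx, this⟩
      · intro i
        refine ⟨?_, ?_⟩
        · simpa [extMap] using (hpiv i).1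
        · intro j hj
          refine Fin.lastCases ?_ (fun j => fun hj => ?_) j hj
          · intro _; simp [extMap]
          · have : t' i < j := by exact_mod_cast Fin.castSucc_lt_castSucc_iff.mp hj
            simpa [extMap] using (hpiv i).2 j this
    · -- pick w with last coordinate g
      obtain ⟨w, hwN, hwg⟩ : ∃ w ∈ N, f w = g := by
        have : g ∈ I := by rw [hg]; exact Submodule.mem_span_singleton_self g
        exact this
      set N₀ : Submodule ℤ (Fin (n+1) → ℤ) := N ⊓ LinearMap.ker f with hN₀
      have hlast0 : ∀ x ∈ N₀, x (Fin.last n) = 0 := fun x hx => hx.2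
      obtain ⟨k, e', t', hmono, hli, hspan, hpiv⟩ := IH (N₀.map ρ)
      set E : Fin (k+1) → (Fin (n+1) → ℤ) := Fin.snoc (fun i => extMap n (e' i)) w with hE
      have hEmem : ∀ x ∈ N₀.map ρ, extMap n x ∈ N₀ := by
        rintro x ⟨z, hz, rfl⟩
        rw [show ρ z = z ∘ Fin.castSucc from rfl, extMap_rest z (hlast0 z hz)]
        exact hz
      have hE'mem : ∀ i, extMap n (e' i) ∈ N₀ := by
        intro i
        apply hEmem
        rw [← hspan]
        exact Submodule.subset_span ⟨i, rfl⟩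
      have hspanE' : Submodule.span ℤ (Set.range fun i => extMap n (e' i)) = N₀ := by
        have : Set.range (fun i => extMap n (e' i)) = extMap n '' Set.range e' := by
          ext x; simp [Set.range_comp]
        rw [this, Submodule.span_image, hspan]
        apply le_antisymm
        · rintro x ⟨y, hy, rfl⟩; exact hEmem y hy
        · intro x hx
          exact ⟨ρ x, Submodule.mem_map_of_mem hx, extMap_rest x (hlast0 x hx)⟩
      refine ⟨k+1, E, Fin.snoc (fun i => (t' i).castSucc) (Fin.last n), ?_, ?_, ?_, ?_⟩
      · intro i j hij
        rcases Fin.eq_castSucc_or_eq_last j with ⟨j', rfl⟩ | rfl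
        · rcases Fin.eq_castSucc_or_eq_last i with ⟨i', rfl⟩ | rfl
          · simp only [Fin.snoc_castSucc]
            exact Fin.castSucc_lt_castSucc_iff.mpr (hmono (Fin.castSucc_lt_castSucc_iff.mp hij))
          · exact absurd hij (Fin.castSucc_lt_last j').asymm
        · rcases Fin.eq_castSucc_or_eq_last i with ⟨i', rfl⟩ | rfl
          · simp only [Fin.snoc_castSucc, Fin.snoc_last]
            exact Fin.castSucc_lt_last _
          · exact absurd hij (lt_irrefl _)
      · rw [Fintype.linearIndependent_iff]
        intro a ha
        have hsplit : (∑ i : Fin k, a i.castSucc • E i.castSucc) + a (Fin.last k) • E (Fin.last k) = 0 := by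
          rw [Fin.sum_univ_castSucc] at ha; exact ha
        have hfE : ∀ i : Fin k, f (E i.castSucc) = 0 := by
          intro i
          simp only [hE, Fin.snoc_castSucc]
          simp [f, extMap]
        have halast : a (Fin.last k) = 0 := by
          have := congrArg f hsplit
          simp only [map_add, map_sum, map_smul, map_zero] at this
          rw [Finset.sum_eq_zero (fun i _ => by rw [hfE i, smul_zero])] at this
          simp only [zero_add, hE, Fin.snoc_last, hwg, smul_eq_mul] at this
          rcases mul_eq_zero.mp this with h | h
          · exact h
          · exact absurd h hg0
        have hsum0 : (∑ i : Fin k, a i.castSucc • extMap n (e' i)) = 0 := by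
          rw [halast, zero_smul, add_zero] at hsplit
          simpa [hE] using hsplit
        have hli' := (hli.map' (extMap n) (LinearMap.ker_eq_bot.mpr (extMap_inj n)))
        have := (Fintype.linearIndependent_iff.mp hli') (fun i => a i.castSucc) (by simpa using hsum0)
        intro i
        refine Fin.lastCases halast (fun i => this i) i
      · apply le_antisymm
        · rw [Submodule.span_le]
          rintro x ⟨i, rfl⟩
          refine Fin.lastCases ?_ (fun i => ?_) i
          · rw [show E (Fin.last k) = w from Fin.snoc_last _ _]
            exact hwN
          · rw [show E i.castSucc = extMap n (e' i) from Fin.snoc_castSucc _ _ _]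
            exact (hE'mem i).1
        · intro x hx
          have hfx : f x ∈ I := Submodule.mem_map_of_mem hx
          rw [hg, Submodule.mem_span_singleton] at hfx
          obtain ⟨c, hc⟩ := hfx
          have hx0 : x - c • w ∈ N₀ := by
            constructor
            · exact N.sub_mem hx (N.smul_mem c hwN)
            · refine LinearMap.mem_ker.mpr ?_
              rw [map_sub, map_smul, hwg, ← hc, sub_self]
          have hx0' : x - c • w ∈ Submodule.span ℤ (Set.range E) := by
            rw [← hspanE'] at hx0
            refine Submodule.span_mono ?_ hx0
            rintro y ⟨i, rfl⟩
            exact ⟨i.castSucc, by simp [hE]⟩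
          have hw' : w ∈ Submodule.span ℤ (Set.range E) :=
            Submodule.subset_span ⟨Fin.last k, by simp [hE]⟩
          have := Submodule.add_mem _ hx0' (Submodule.smul_mem _ c hw')
          simpa using this
      · intro i
        refine Fin.lastCases ?_ (fun i => ?_) i
        · simp only [hE, Fin.snoc_last]
          constructor
          · have : w (Fin.last n) = g := hwg
            rw [this]; exact hg0
          · intro j hj; exact absurd hj (Fin.not_lt.mpr (Fin.le_last j))
        · simp only [hE, Fin.snoc_castSucc]
          constructor
          · simpa [extMap] using (hpiv i).1
          · intro j hj
            refine Fin.lastCases ?_ (fun j => fun hj => ?_) j hj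
            · intro _; simp [extMap]
            · have : t' i < j := Fin.castSucc_lt_castSucc_iff.mp hj
              simpa [extMap] using (hpiv i).2 j this

theorem exists_unimodular_triangular_transform {m n k : ℕ}
    (b : Fin n → EuclideanSpace ℝ (Fin m))
    (hb : LinearIndependent ℝ b)
    (d : Fin k → EuclideanSpace ℝ (Fin m))
    (hd : LinearIndependent ℝ d) (hdL : ∀ i, inLattice b (d i)) :
    ∃ (U : Matrix (Fin k) (Fin k) ℤ) (t : Fin k → Fin n) (lam : Fin k → Fin n → ℤ),
      (U.det = 1 ∨ U.det = -1) ∧ StrictMono t ∧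
      ∀ i : Fin k,
        (∑ l : Fin k, ((U l i : ℝ) • d l)) = (∑ j : Fin n, ((lam i j : ℝ) • b j)) ∧
        lam i (t i) ≠ 0 ∧ (∀ j : Fin n, t i < j → lam i j = 0) := by
  classical
  choose C hC using hdL
  -- the rows of the coefficient matrix are linearly independent over ℤ
  have hrLI : LinearIndependent ℤ C := by
    rw [Fintype.linearIndependent_iff]
    intro a ha
    have h2 : ∀ j, (∑ i, a i * C i j) = 0 := by
      intro j
      have := congrFun ha j
      simpa [Finset.sum_apply] using this
    have hreal : (∑ i, (a i : ℝ) • d i) = 0 := by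
      calc ∑ i, (a i : ℝ) • d i
          = ∑ i, ∑ j, ((a i * C i j : ℤ) : ℝ) • b j := by
            refine Finset.sum_congr rfl fun i _ => ?_
            rw [hC i, Finset.smul_sum]
            refine Finset.sum_congr rfl fun j _ => ?_
            rw [smul_smul]
            congr 1
            push_cast
            ring
        _ = ∑ j, ((∑ i, a i * C i j : ℤ) : ℝ) • b j := by
            rw [Finset.sum_comm]
            refine Finset.sum_congr rfl fun j _ => ?_
            rw [← Finset.sum_smul]
            congr 1
            push_cast
            rfl
        _ = 0 := by simp [h2]
    intro i
    have := Fintype.linearIndependent_iff.mp hd (fun i => (a i : ℝ)) hreal i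
    exact_mod_cast this
  set N := Submodule.span ℤ (Set.range C) with hN
  obtain ⟨k', e, t, hmono, hle, hspan, hpiv⟩ := echelon_basis n N
  let Br : Module.Basis (Fin k) ℤ N := Module.Basis.span hrLI
  let Be : Module.Basis (Fin k') ℤ N :=
    (Module.Basis.span hle).map (LinearEquiv.ofEq _ _ (by rw [hspan]))
  have hkk : k' = k := by
    simpa using Fintype.card_congr (Module.Basis.indexEquiv Be Br)
  subst hkk
  have hBe : ∀ l, ((Be l : N) : Fin n → ℤ) = e l := by
    intro l
    simp [Be, Module.Basis.span_apply]
  have hBr : ∀ i, ((Br i : N) : Fin n → ℤ) = C i := by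
    intro i
    exact congrArg Subtype.val (Module.Basis.span_apply hrLI i)
  set M := (Be.toMatrix ⇑Br).transpose with hM
  have hrepr : ∀ i, C i = ∑ l, M i l • e l := by
    intro i
    have h1 := Be.sum_repr (Br i)
    have h2 := congrArg (fun z : N => (z : Fin n → ℤ)) h1
    rw [← hBr i, ← h2]
    push_cast
    refine Finset.sum_congr rfl fun l _ => ?_
    rw [hM]
    simp [Matrix.transpose_apply, Module.Basis.toMatrix_apply, hBe]
  have hinv : Invertible (Be.toMatrix ⇑Br) := Module.Basis.invertibleToMatrix Be Br
  have hdetunit : IsUnit M.det := by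
    rw [hM, Matrix.det_transpose]
    exact (Matrix.isUnit_iff_isUnit_det _).mp (isUnit_of_invertible _)
  have hMdet : M.det = 1 ∨ M.det = -1 := Int.isUnit_iff.mp hdetunit
  have hMsq : M.det * M.det = 1 := by rcases hMdet with h | h <;> rw [h] <;> ring
  set V := M.det • M.adjugate with hV
  have hVM : V * M = 1 := by
    rw [hV, Matrix.smul_mul, Matrix.adjugate_mul, smul_smul, hMsq, one_smul]
  have hVdet : V.det = 1 ∨ V.det = -1 := by
    have h1 : V.det * M.det = 1 := by rw [← Matrix.det_mul, hVM, Matrix.det_one]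
    rcases hMdet with h | h <;> rw [h] at h1 <;> [left; right] <;> omega
  set Cmat := Matrix.of C with hCmat
  set Emat := Matrix.of e with hEmat
  have hCME : Cmat = M * Emat := by
    ext i j
    rw [Matrix.mul_apply]
    have := congrFun (hrepr i) j
    simpa [Finset.sum_apply, hCmat, hEmat] using this
  have hVC : V * Cmat = Emat := by
    rw [hCME, ← Matrix.mul_assoc, hVM, Matrix.one_mul]
  refine ⟨V.transpose, t, e, by rwa [Matrix.det_transpose], hmono, ?_⟩
  intro i
  refine ⟨?_, (hpiv i).1, (hpiv i).2⟩
  calc ∑ l, ((V.transpose l i : ℤ) : ℝ) • d l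
      = ∑ l, ∑ j, ((V i l * C l j : ℤ) : ℝ) • b j := by
        refine Finset.sum_congr rfl fun l _ => ?_
        rw [Matrix.transpose_apply, hC l, Finset.smul_sum]
        refine Finset.sum_congr rfl fun j _ => ?_
        rw [smul_smul]
        congr 1
        push_cast
        ring
    _ = ∑ j, ((∑ l, V i l * C l j : ℤ) : ℝ) • b j := by
        rw [Finset.sum_comm]
        refine Finset.sum_congr rfl fun j _ => ?_
        rw [← Finset.sum_smul]
        congr 1
        push_cast
        rfl
    _ = ∑ j, ((e i j : ℤ) : ℝ) • b j := by
        refine Finset.sum_congr rfl fun j _ => ?_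
        have h3 : (∑ l, V i l * C l j) = e i j := by
          have := congrFun (congrFun hVC i) j
          simpa [Matrix.mul_apply, hCmat, hEmat] using this
        rw [h3]
end

section
/- Let b₁,...,bₙ ∈ ℝ^m be an LLL-reduced basis with Gram–Schmidt vectors b₁*,...,bₙ*. Then for all 1 ≤ i ≤ j ≤ n, ‖bᵢ*‖² ≤ 2^{j−i}·‖bⱼ*‖². -/
open scoped BigOperators RealInnerProductSpace

lemma lll_step_aux {m n : ℕ} (b : Fin n → EuclideanSpace ℝ (Fin m)) (hred : LLLReduced b)
    (i j : Fin n) (h : (i : ℕ) + 1 = (j : ℕ)) :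
    ‖gso b i‖ ^ 2 ≤ 2 * ‖gso b j‖ ^ 2 := by
  have hij : i < j := by
    rw [Fin.lt_iff_val_lt_val]; omega
  have horth : ⟪gso b j, gso b i⟫ = 0 := by
    haveI : WellFoundedLT (Fin n) := inferInstance
    exact InnerProductSpace.gramSchmidt_orthogonal ℝ b hij.ne'
  have hmu : |mu b j i| ≤ 1 / 2 := hred.1 i j hij
  have hx := hred.2 i j h
  have hexp : ‖gso b j + mu b j i • gso b i‖ ^ 2
      = ‖gso b j‖ ^ 2 + (mu b j i) ^ 2 * ‖gso b i‖ ^ 2 := by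
    rw [norm_add_sq_real, real_inner_smul_right, horth, norm_smul]
    simp [mul_pow]
  have hmu2 : (mu b j i) ^ 2 ≤ 1 / 4 := by
    have := sq_abs (mu b j i)
    nlinarith [abs_nonneg (mu b j i)]
  nlinarith [sq_nonneg ‖gso b i‖]

theorem gso_norm_sq_le_two_pow {m n : ℕ}
    (b : Fin n → EuclideanSpace ℝ (Fin m))
    (hb : LinearIndependent ℝ b) (hred : LLLReduced b)
    (i j : Fin n) (hij : i ≤ j) :
    ‖gso b i‖ ^ 2 ≤ 2 ^ ((j : ℕ) - (i : ℕ)) * ‖gso b j‖ ^ 2 := by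
  obtain ⟨k, hk⟩ : ∃ k, (i : ℕ) + k = (j : ℕ) := ⟨j - i, by omega⟩
  have hjk : (j : ℕ) - (i : ℕ) = k := by omega
  rw [hjk]
  clear hjk hij
  induction k generalizing j with
  | zero =>
    have : i = j := Fin.ext (by omega)
    subst this; simp
  | succ k ih =>
    have hlt : (i : ℕ) + k < n := by omega
    set j' : Fin n := ⟨(i : ℕ) + k, hlt⟩
    have h1 : ‖gso b i‖ ^ 2 ≤ 2 ^ k * ‖gso b j'‖ ^ 2 := ih j' rfl
    have h2 : ‖gso b j'‖ ^ 2 ≤ 2 * ‖gso b j‖ ^ 2 := lll_step_aux b hred j' j (by simp [j']; omega)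
    calc ‖gso b i‖ ^ 2 ≤ 2 ^ k * ‖gso b j'‖ ^ 2 := h1
      _ ≤ 2 ^ k * (2 * ‖gso b j‖ ^ 2) := by
          have : (0:ℝ) ≤ 2 ^ k := by positivity
          nlinarith
      _ = 2 ^ (k + 1) * ‖gso b j‖ ^ 2 := by ring
end

section
/- Let b₁,...,bₙ ∈ ℝ^m be an LLL-reduced basis of the lattice L, and for 1 ≤ k ≤ n write D_k = (det L(b₁,...,b_k))². Then D_{n−1} ≤ 2^{(n−1)/2} · (D_n)^{1 − 1/n}. -/
open scoped BigOperators RealInnerProductSpace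

open Finset in
lemma gram_det_eq {m k : ℕ} (d : Fin k → EuclideanSpace ℝ (Fin m)) :
    Matrix.det (Matrix.of fun i j => ⟪d i, d j⟫) = ∏ i, ‖gso d i‖ ^ 2 := by
  classical
  haveI : WellFoundedLT (Fin k) := inferInstance
  unfold gso
  set g := InnerProductSpace.gramSchmidt ℝ d with hg
  set U : Matrix (Fin k) (Fin k) ℝ := fun j i =>
    if j = i then 1 else if j < i then ⟪g j, d i⟫ / ‖g j‖ ^ 2 else 0 with hU
  have hUd : ∀ j i : Fin k, j < i → U j i = ⟪g j, d i⟫ / ‖g j‖ ^ 2 := by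
    intro j i h
    show (if j = i then (1:ℝ) else if j < i then ⟪g j, d i⟫ / ‖g j‖ ^ 2 else 0) = _
    rw [if_neg (ne_of_lt h), if_pos h]
  have hUdiag : ∀ j : Fin k, U j j = 1 := fun j => if_pos rfl
  have hU0 : ∀ j i : Fin k, i < j → U j i = 0 := by
    intro j i h
    show (if j = i then (1:ℝ) else if j < i then ⟪g j, d i⟫ / ‖g j‖ ^ 2 else 0) = _
    rw [if_neg (ne_of_gt h), if_neg (not_lt.2 h.le)]
  have hd : ∀ i, d i = ∑ j, U j i • g j := by
    intro i
    have h2 : ∑ j, U j i • g j = ∑ j ∈ Iic i, U j i • g j := by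
      refine (Finset.sum_subset (Finset.subset_univ _) ?_).symm
      intro j _ hj
      simp only [Finset.mem_Iic, not_le] at hj
      rw [hU0 j i hj, zero_smul]
    rw [h2, ← Finset.Iio_insert, Finset.sum_insert (by simp), hUdiag, one_smul]
    have h1 := InnerProductSpace.gramSchmidt_def'' ℝ d i
    rw [h1]
    congr 1
    apply Finset.sum_congr rfl
    intro j hj
    have hji : j < i := Finset.mem_Iio.1 hj
    rw [hUd j i hji]
    norm_num
    rfl
  have horth : ∀ j l : Fin k, ⟪g j, g l⟫ = if j = l then ‖g j‖ ^ 2 else 0 := by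
    intro j l
    by_cases h : j = l
    · subst h; rw [if_pos rfl]; exact real_inner_self_eq_norm_sq _
    · rw [if_neg h]; exact InnerProductSpace.gramSchmidt_orthogonal ℝ d h
  have hinner : ∀ i i' : Fin k, ⟪d i, d i'⟫ = ∑ j, U j i * U j i' * ‖g j‖ ^ 2 := by
    intro i i'
    rw [hd i, hd i', sum_inner]
    apply Finset.sum_congr rfl
    intro j _
    rw [inner_sum]
    rw [Finset.sum_eq_single j]
    · rw [real_inner_smul_left, real_inner_smul_right, horth, if_pos rfl]; ring
    · intro l _ hl
      rw [real_inner_smul_left, real_inner_smul_right, horth, if_neg (Ne.symm hl)]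
      ring
    · simp
  have hgram : (Matrix.of fun i j => ⟪d i, d j⟫) =
      U.transpose * (Matrix.diagonal fun j => ‖g j‖ ^ 2) * U := by
    ext i i'
    rw [Matrix.mul_assoc, Matrix.mul_apply, Matrix.of_apply, hinner]
    apply Finset.sum_congr rfl
    intro j _
    rw [Matrix.diagonal_mul, Matrix.transpose_apply]
    ring
  have hUdet : U.det = 1 := by
    rw [Matrix.det_of_upperTriangular (fun i j hij => hU0 i j hij)]
    simp [hUdiag]
  rw [hgram, Matrix.det_mul, Matrix.det_mul, Matrix.det_transpose, Matrix.det_diagonal, hUdet]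
  ring

open Finset in
lemma gso_prefix {m n : ℕ} (b : Fin n → EuclideanSpace ℝ (Fin m)) (k : ℕ) (hk : k ≤ n)
    (i : Fin k) :
    gso (fun j : Fin k => b (Fin.castLE hk j)) i = gso b (Fin.castLE hk i) := by
  haveI : WellFoundedLT (Fin k) := inferInstance
  haveI : WellFoundedLT (Fin n) := inferInstance
  have H : ∀ N : ℕ, ∀ i : Fin k, (i : ℕ) < N →
      InnerProductSpace.gramSchmidt ℝ (fun j : Fin k => b (Fin.castLE hk j)) i
        = InnerProductSpace.gramSchmidt ℝ b (Fin.castLE hk i) := by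
    intro N
    induction N with
    | zero => intro i hi; exact absurd hi (Nat.not_lt_zero _)
    | succ N ih =>
      intro i hi
      rw [InnerProductSpace.gramSchmidt_def, InnerProductSpace.gramSchmidt_def ℝ b]
      congr 1
      refine Finset.sum_bij (fun (j : Fin k) (_ : j ∈ Finset.Iio i) => Fin.castLE hk j)
        ?_ ?_ ?_ ?_
      · intro j hj
        rw [Finset.mem_Iio] at *
        exact hj
      · intro j1 _ j2 _ h
        exact Fin.castLE_injective hk h
      · intro j' hj'
        rw [Finset.mem_Iio] at hj'
        have hlt : (j' : ℕ) < k := lt_of_lt_of_le hj' i.2.le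
        exact ⟨⟨(j' : ℕ), hlt⟩, Finset.mem_Iio.2 hj', rfl⟩
      · intro j hj
        rw [Finset.mem_Iio] at hj
        rw [ih j (lt_of_lt_of_le hj (Nat.lt_succ_iff.mp hi))]
  unfold gso
  exact H k i i.2

lemma key_ineq (n : ℕ) (hn : 1 ≤ n) (P F : ℝ) (hP : 0 < P) (hF : 0 < F)
    (h : P ≤ (2:ℝ) ^ ((((n:ℝ) - 1) * n) / 2) * F ^ ((n:ℝ) - 1)) :
    P ≤ 2 ^ (((n:ℝ) - 1) / 2) * (P * F) ^ (1 - 1 / (n:ℝ)) := by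
  have hn0 : (0:ℝ) < n := by exact_mod_cast hn
  have h1 : P = P ^ (1 - 1/(n:ℝ)) * P ^ ((1:ℝ)/n) := by
    rw [← Real.rpow_add hP]
    norm_num
  have h2 : P ^ ((1:ℝ)/n) ≤ ((2:ℝ) ^ ((((n:ℝ) - 1) * n) / 2) * F ^ ((n:ℝ) - 1)) ^ ((1:ℝ)/n) :=
    Real.rpow_le_rpow hP.le h (by positivity)
  rw [Real.mul_rpow (by positivity) (by positivity)] at h2
  rw [← Real.rpow_mul (by norm_num : (0:ℝ) ≤ 2), ← Real.rpow_mul hF.le] at h2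
  have e1 : ((((n:ℝ) - 1) * n) / 2) * ((1:ℝ)/n) = ((n:ℝ) - 1) / 2 := by
    field_simp
  have e2 : ((n:ℝ) - 1) * ((1:ℝ)/n) = 1 - 1/(n:ℝ) := by
    field_simp
  rw [e1, e2] at h2
  calc P = P ^ (1 - 1/(n:ℝ)) * P ^ ((1:ℝ)/n) := h1
    _ ≤ P ^ (1 - 1/(n:ℝ)) * ((2:ℝ) ^ (((n:ℝ) - 1)/2) * F ^ (1 - 1/(n:ℝ))) := by
        apply mul_le_mul_of_nonneg_left h2 (by positivity)
    _ = 2 ^ (((n:ℝ) - 1) / 2) * (P * F) ^ (1 - 1 / (n:ℝ)) := by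
        rw [Real.mul_rpow hP.le hF.le]; ring

section
open Finset
theorem det_sq_prefix_pred_le {m n : ℕ} (hn : 1 ≤ n)
    (b : Fin n → EuclideanSpace ℝ (Fin m))
    (hb : LinearIndependent ℝ b) (hred : LLLReduced b) :
    latticeDet (fun i : Fin (n - 1) => b (Fin.castLE (by omega) i)) ^ 2 ≤
      2 ^ (((n : ℝ) - 1) / 2) * (latticeDet b ^ 2) ^ (1 - 1 / (n : ℝ)) := by
  classical
  haveI : WellFoundedLT (Fin n) := inferInstance
  have hkn : n - 1 ≤ n := Nat.sub_le n 1
  have hk1 : n - 1 + 1 = n := by omega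
  set F : Fin n → ℝ := fun i => ‖gso b i‖ ^ 2 with hF
  have hFpos : ∀ i, 0 < F i := by
    intro i
    have hne : gso b i ≠ 0 := by unfold gso; exact InnerProductSpace.gramSchmidt_ne_zero i hb
    exact pow_pos (norm_pos_iff.mpr hne) 2
  have hstep : ∀ i j : Fin n, (i : ℕ) + 1 = (j : ℕ) → F i ≤ 2 * F j := by
    intro i j hij
    have hij' : i < j := by rw [Fin.lt_def]; omega
    have h1 := hred.2 i j hij
    have h2 := hred.1 i j hij'
    set μ := mu b j i with hμ
    have horth : ⟪gso b j, gso b i⟫ = 0 := by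
      unfold gso; exact InnerProductSpace.gramSchmidt_orthogonal ℝ b (ne_of_gt hij')
    have hexp : ‖gso b j + μ • gso b i‖ ^ 2 = F j + μ ^ 2 * F i := by
      rw [norm_add_sq_real, real_inner_smul_right, horth, mul_zero, norm_smul, mul_pow,
        Real.norm_eq_abs, sq_abs]
      ring
    rw [hexp] at h1
    have hFi : ‖gso b i‖ ^ 2 = F i := rfl
    rw [hFi] at h1
    have hμ2 : μ ^ 2 ≤ 1 / 4 := by nlinarith [sq_abs μ, abs_nonneg μ]
    nlinarith [hFpos i, hFpos j]
  have hchain : ∀ gap : ℕ, ∀ i j : Fin n, (i : ℕ) + gap = (j : ℕ) → F i ≤ 2 ^ gap * F j := by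
    intro gap
    induction gap with
    | zero =>
      intro i j h
      have : i = j := Fin.ext (by omega)
      subst this; simp
    | succ g ih =>
      intro i j h
      have hmid : (i : ℕ) + g < n := by have := j.2; omega
      have h1 := ih i ⟨(i : ℕ) + g, hmid⟩ rfl
      have h2 := hstep ⟨(i : ℕ) + g, hmid⟩ j (by simpa using by omega)
      calc F i ≤ 2 ^ g * F ⟨(i : ℕ) + g, hmid⟩ := h1
        _ ≤ 2 ^ g * (2 * F j) := by
            exact mul_le_mul_of_nonneg_left h2 (by positivity)
        _ = 2 ^ (g + 1) * F j := by ring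
  set f : ℕ → ℝ := fun i => if h : i < n then F ⟨i, h⟩ else 1 with hf
  have hfpos : ∀ i, 0 < f i := by
    intro i
    have hfi : f i = if h : i < n then F ⟨i, h⟩ else 1 := rfl
    rw [hfi]
    split
    · exact hFpos _
    · norm_num
  have hfF : ∀ i : Fin n, F i = f (i : ℕ) := by
    intro i
    have hfi : f (i : ℕ) = if h : (i : ℕ) < n then F ⟨(i : ℕ), h⟩ else 1 := rfl
    rw [hfi, dif_pos i.2]
  have hQ : latticeDet b ^ 2 = ∏ i ∈ range n, f i := by
    unfold latticeDet
    rw [Real.sq_sqrt (by rw [gram_det_eq]; positivity), gram_det_eq,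
      ← Fin.prod_univ_eq_prod_range f n]
    exact Finset.prod_congr rfl fun i _ => hfF i
  have hPd : latticeDet (fun i : Fin (n - 1) => b (Fin.castLE hkn i)) ^ 2
      = ∏ i ∈ range (n - 1), f i := by
    unfold latticeDet
    rw [Real.sq_sqrt (by rw [gram_det_eq]; positivity), gram_det_eq,
      ← Fin.prod_univ_eq_prod_range f (n - 1)]
    apply Finset.prod_congr rfl
    intro i _
    rw [gso_prefix b (n - 1) hkn i]
    have : (‖gso b (Fin.castLE hkn i)‖ ^ 2) = F (Fin.castLE hkn i) := rfl
    rw [this, hfF]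
    rfl
  set P : ℝ := ∏ i ∈ range (n - 1), f i with hP
  have hPpos : 0 < P := Finset.prod_pos fun i _ => hfpos i
  have hQP : ∏ i ∈ range n, f i = P * f (n - 1) := by
    conv_lhs => rw [← hk1]
    rw [Finset.prod_range_succ]
  have hfk : ∀ i, i < n - 1 → f i ≤ 2 ^ (n - 1 - i) * f (n - 1) := by
    intro i hi
    have h := hchain (n - 1 - i) ⟨i, by omega⟩ ⟨n - 1, by omega⟩ (by simp only [Fin.val_mk]; omega)
    rw [hfF ⟨i, by omega⟩, hfF ⟨n - 1, by omega⟩] at h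
    exact h
  have hPb : P ≤ (2 : ℝ) ^ (∑ i ∈ range (n - 1), (n - 1 - i)) * f (n - 1) ^ (n - 1) := by
    calc P ≤ ∏ i ∈ range (n - 1), ((2 : ℝ) ^ (n - 1 - i) * f (n - 1)) :=
          Finset.prod_le_prod (fun i _ => (hfpos i).le)
            (fun i hi => hfk i (Finset.mem_range.mp hi))
      _ = (∏ i ∈ range (n - 1), (2 : ℝ) ^ (n - 1 - i)) * f (n - 1) ^ (n - 1) := by
          rw [Finset.prod_mul_distrib, Finset.prod_const, Finset.card_range]
      _ = _ := by rw [Finset.prod_pow_eq_pow_sum]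
  set M : ℕ := ∑ i ∈ range (n - 1), (n - 1 - i) with hM
  have hM2 : M * 2 = (n - 1) * n := by
    have r1 : M = ∑ i ∈ range (n - 1 + 1), i := by
      rw [Finset.sum_range_succ' (fun i => i) (n - 1)]
      rw [hM, ← Finset.sum_range_reflect (fun j => j + 1) (n - 1)]
      rw [add_zero]
      apply Finset.sum_congr rfl
      intro i hi
      rw [Finset.mem_range] at hi
      omega
    rw [r1, Finset.sum_range_id_mul_two, hk1]
    exact mul_comm _ _
  have hkreal : ((n - 1 : ℕ) : ℝ) = (n : ℝ) - 1 := by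
    rw [Nat.cast_sub hn]; norm_num
  have hMreal : ((M : ℕ) : ℝ) = ((n : ℝ) - 1) * n / 2 := by
    have := congrArg (fun x : ℕ => (x : ℝ)) hM2
    push_cast at this
    rw [hkreal] at this
    linarith
  have hPbound : P ≤ (2 : ℝ) ^ ((((n : ℝ)) - 1) * n / 2) * f (n - 1) ^ ((n : ℝ) - 1) := by
    have e1 : (2 : ℝ) ^ (M : ℕ) = (2 : ℝ) ^ ((((n : ℝ)) - 1) * n / 2) := by
      rw [← Real.rpow_natCast 2 M, hMreal]
    have e2 : f (n - 1) ^ ((n - 1 : ℕ)) = f (n - 1) ^ ((n : ℝ) - 1) := by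
      rw [← Real.rpow_natCast, hkreal]
    rw [← e1, ← e2]
    exact hPb
  have hfin := key_ineq n hn P (f (n - 1)) hPpos (hfpos (n - 1)) hPbound
  show latticeDet (fun i : Fin (n - 1) => b (Fin.castLE hkn i)) ^ 2 ≤ _
  rw [hPd, hQ, hQP]
  exact hfin

end
end
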